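/- Let N and L be positive integers, let lev : Fin N → {0, 1, …, L} be a level function, and for a real N×N matrix K and levels i, j ∈ {0,…,L} let K_{(i,j)} denote the sub-block of K consisting of the rows r with lev(r) = i and columns c with lev(c) = j. Suppose there is c ≥ 0 such that ‖K_{(i,j)}‖₂ ≤ c·2^{−(i+j)} for all i, j. For m ∈ ℕ define the truncated matrix K^m by (K^m)_{rc} = K_{rc} if lev(r) + lev(c) ≤ m and (K^m)_{rc} = 0 otherwise. Then ‖K − K^m‖₂ ≤ c·(L+1)·2^{−m}. -/

import Mathlib

open Finset

/-- The spectral norm (ℓ²-operator norm) of a real rectangular matrix. -/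
noncomputable def l2OpNorm {m n : Type*} [Fintype m] [Fintype n] [DecidableEq n]
    (M : Matrix m n ℝ) : ℝ :=
  ‖LinearMap.toContinuousLinearMap (Matrix.toEuclideanLin M)‖

/-- The sub-block of `K` with rows of level `i` and columns of level `j`. -/
def levBlock {N : ℕ} (lev : Fin N → ℕ) (K : Matrix (Fin N) (Fin N) ℝ) (i j : ℕ) :
    Matrix {r : Fin N // lev r = i} {c : Fin N // lev c = j} ℝ :=
  Matrix.of fun r c => K r.1 c.1

lemma toEuclideanLin_ent {m n : Type*} [Fintype m] [Fintype n] [DecidableEq n]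
    (M : Matrix m n ℝ) (x : EuclideanSpace ℝ n) (r : m) :
    Matrix.toEuclideanLin M x r = ∑ s, M r s * x s := rfl

lemma l2OpNorm_nonneg {m n : Type*} [Fintype m] [Fintype n] [DecidableEq n]
    (M : Matrix m n ℝ) : 0 ≤ l2OpNorm M := norm_nonneg _

lemma le_l2OpNorm {m n : Type*} [Fintype m] [Fintype n] [DecidableEq n]
    (M : Matrix m n ℝ) (x : EuclideanSpace ℝ n) :
    ‖Matrix.toEuclideanLin M x‖ ≤ l2OpNorm M * ‖x‖ :=
  (LinearMap.toContinuousLinearMap (Matrix.toEuclideanLin M)).le_opNorm x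

lemma l2OpNorm_le {m n : Type*} [Fintype m] [Fintype n] [DecidableEq n]
    (M : Matrix m n ℝ) (C : ℝ) (hC : 0 ≤ C)
    (h : ∀ x : EuclideanSpace ℝ n, ‖Matrix.toEuclideanLin M x‖ ≤ C * ‖x‖) :
    l2OpNorm M ≤ C :=
  ContinuousLinearMap.opNorm_le_bound _ hC h

/-- The block of level `(i,j)` embedded back into the full matrix. -/
def embBlock {N : ℕ} (lev : Fin N → ℕ) (K : Matrix (Fin N) (Fin N) ℝ) (i j : ℕ) :
    Matrix (Fin N) (Fin N) ℝ :=
  Matrix.of fun r s => if lev r = i ∧ lev s = j then K r s else 0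

lemma emb_le_block {N : ℕ} (lev : Fin N → ℕ) (K : Matrix (Fin N) (Fin N) ℝ) (i j : ℕ) :
    l2OpNorm (embBlock lev K i j) ≤ l2OpNorm (levBlock lev K i j) := by
  refine l2OpNorm_le _ _ (l2OpNorm_nonneg _) fun x => ?_
  set y : EuclideanSpace ℝ {c : Fin N // lev c = j} :=
    WithLp.toLp 2 (fun c : {c : Fin N // lev c = j} => x c.1) with hy
  have hyx : ‖y‖ ≤ ‖x‖ := by
    rw [EuclideanSpace.norm_eq, EuclideanSpace.norm_eq]
    apply Real.sqrt_le_sqrt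
    have h1 : ∑ c : {c : Fin N // lev c = j}, ‖x c.1‖ ^ 2
        = ∑ c ∈ univ.filter (fun c => lev c = j), ‖x c‖ ^ 2 :=
      (Finset.sum_subtype (univ.filter (fun c => lev c = j)) (by simp)
        (fun c => ‖x c‖ ^ 2)).symm
    calc ∑ c : {c : Fin N // lev c = j}, ‖y c‖ ^ 2
        = ∑ c ∈ univ.filter (fun c => lev c = j), ‖x c‖ ^ 2 := h1
      _ ≤ ∑ c : Fin N, ‖x c‖ ^ 2 :=
          Finset.sum_le_sum_of_subset_of_nonneg (filter_subset _ _)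
            (fun _ _ _ => by positivity)
  have key : ‖Matrix.toEuclideanLin (embBlock lev K i j) x‖
      = ‖Matrix.toEuclideanLin (levBlock lev K i j) y‖ := by
    rw [EuclideanSpace.norm_eq, EuclideanSpace.norm_eq]
    congr 1
    have h2 : ∑ r : {r : Fin N // lev r = i},
          ‖Matrix.toEuclideanLin (levBlock lev K i j) y r‖ ^ 2
        = ∑ r ∈ univ.filter (fun r => lev r = i),
          ‖∑ c ∈ univ.filter (fun c => lev c = j), K r c * x c‖ ^ 2 := by
      calc ∑ r : {r : Fin N // lev r = i},
            ‖Matrix.toEuclideanLin (levBlock lev K i j) y r‖ ^ 2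
          = ∑ r : {r : Fin N // lev r = i},
            ‖∑ c ∈ univ.filter (fun c => lev c = j), K r.1 c * x c‖ ^ 2 := by
            refine Finset.sum_congr rfl fun r _ => ?_
            congr 2
            rw [toEuclideanLin_ent]
            exact (Finset.sum_subtype (p := fun c => lev c = j)
              (univ.filter (fun c => lev c = j)) (by simp)
              (fun c => K r.1 c * x c)).symm
        _ = ∑ r ∈ univ.filter (fun r => lev r = i),
            ‖∑ c ∈ univ.filter (fun c => lev c = j), K r c * x c‖ ^ 2 :=
            (Finset.sum_subtype (univ.filter (fun r => lev r = i)) (by simp)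
              (fun r => ‖∑ c ∈ univ.filter (fun c => lev c = j), K r c * x c‖ ^ 2)).symm
    rw [h2]
    have h3 : ∀ r : Fin N, Matrix.toEuclideanLin (embBlock lev K i j) x r
        = if lev r = i then ∑ c ∈ univ.filter (fun c => lev c = j), K r c * x c
          else 0 := by
      intro r
      rw [toEuclideanLin_ent]
      by_cases h : lev r = i
      · rw [if_pos h, Finset.sum_filter]
        refine Finset.sum_congr rfl fun s _ => ?_
        by_cases hs : lev s = j <;> simp [embBlock, h, hs]
      · rw [if_neg h]
        refine Finset.sum_eq_zero fun s _ => ?_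
        simp [embBlock, h]
    calc ∑ r : Fin N, ‖Matrix.toEuclideanLin (embBlock lev K i j) x r‖ ^ 2
        = ∑ r : Fin N, (if lev r = i then
            ‖∑ c ∈ univ.filter (fun c => lev c = j), K r c * x c‖ ^ 2 else 0) := by
          refine Finset.sum_congr rfl fun r _ => ?_
          rw [h3]
          by_cases h : lev r = i <;> simp [h]
      _ = ∑ r ∈ univ.filter (fun r => lev r = i),
            ‖∑ c ∈ univ.filter (fun c => lev c = j), K r c * x c‖ ^ 2 :=
          (Finset.sum_filter _ _).symm
  calc ‖Matrix.toEuclideanLin (embBlock lev K i j) x‖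
      = ‖Matrix.toEuclideanLin (levBlock lev K i j) y‖ := key
    _ ≤ l2OpNorm (levBlock lev K i j) * ‖y‖ := le_l2OpNorm _ _
    _ ≤ l2OpNorm (levBlock lev K i j) * ‖x‖ := by
        exact mul_le_mul_of_nonneg_left hyx (l2OpNorm_nonneg _)

lemma geom_tail_le (m n : ℕ) :
    ∑ t ∈ range n, (if m < t then ((2:ℝ) ^ t)⁻¹ else 0) ≤ ((2:ℝ) ^ m)⁻¹ := by
  have h1 : ∑ t ∈ range n, (if m < t then ((2:ℝ) ^ t)⁻¹ else 0)
      = ∑ t ∈ Ico (m+1) n, ((2:ℝ) ^ t)⁻¹ := by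
    rw [← Finset.sum_filter]
    congr 1
    ext t
    simp only [mem_filter, mem_range, mem_Ico]
    omega
  rw [h1, Finset.sum_Ico_eq_sum_range]
  have h2 : ∀ s : ℕ, ((2:ℝ) ^ (m + 1 + s))⁻¹ = ((2:ℝ) ^ (m+1))⁻¹ * (1/2) ^ s := by
    intro s
    rw [pow_add]
    field_simp
    rw [← mul_pow]; norm_num
  calc ∑ s ∈ range (n - (m+1)), ((2:ℝ) ^ (m + 1 + s))⁻¹
      = ((2:ℝ) ^ (m+1))⁻¹ * ∑ s ∈ range (n - (m+1)), (1/2:ℝ) ^ s := by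
        rw [Finset.mul_sum]
        exact Finset.sum_congr rfl fun s _ => h2 s
    _ ≤ ((2:ℝ) ^ (m+1))⁻¹ * 2 := by
        refine mul_le_mul_of_nonneg_left (sum_geometric_two_le _) (by positivity)
    _ = ((2:ℝ) ^ m)⁻¹ := by
        rw [pow_succ]
        field_simp

lemma inner_sum_le (m i L : ℕ) :
    ∑ j ∈ range (L+1), (if m < i + j then ((2:ℝ) ^ (i + j))⁻¹ else 0)
      ≤ ((2:ℝ) ^ m)⁻¹ := by
  have h1 : ∑ j ∈ range (L+1), (if m < i + j then ((2:ℝ) ^ (i + j))⁻¹ else 0)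
      = ∑ t ∈ Ico i (i + (L+1)), (if m < t then ((2:ℝ) ^ t)⁻¹ else 0) := by
    rw [Finset.sum_Ico_eq_sum_range]
    simp
  rw [h1]
  calc ∑ t ∈ Ico i (i + (L+1)), (if m < t then ((2:ℝ) ^ t)⁻¹ else 0)
      ≤ ∑ t ∈ range (i + (L+1)), (if m < t then ((2:ℝ) ^ t)⁻¹ else 0) := by
        refine Finset.sum_le_sum_of_subset_of_nonneg ?_ (fun t _ _ => ?_)
        · intro t ht
          simp only [mem_Ico] at ht
          simp [ht.2]
        · split <;> positivity
    _ ≤ ((2:ℝ) ^ m)⁻¹ := geom_tail_le m _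

/-- Hyperbolic-cross truncation estimate: if the level blocks of `K` decay like
`‖K_{(i,j)}‖₂ ≤ c·2^{-(i+j)}`, then dropping all entries with `lev r + lev c > m` incurs
a spectral-norm error of at most `c·(L+1)·2^{-m}`. -/
theorem hyperbolic_cross_truncation
    {N L : ℕ} (hN : 0 < N) (hL : 0 < L)
    (lev : Fin N → ℕ) (hlev : ∀ r, lev r ≤ L)
    (K : Matrix (Fin N) (Fin N) ℝ) (c : ℝ) (hc : 0 ≤ c)
    (hblock : ∀ i j, i ≤ L → j ≤ L →
      l2OpNorm (levBlock lev K i j) ≤ c * ((2 : ℝ) ^ (i + j))⁻¹)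
    (m : ℕ) :
    l2OpNorm (K - Matrix.of fun r s => if lev r + lev s ≤ m then K r s else 0) ≤
      c * (L + 1) * ((2 : ℝ) ^ m)⁻¹ := by
  classical
  set S : Finset (ℕ × ℕ) :=
    ((range (L+1)) ×ˢ (range (L+1))).filter (fun p => m < p.1 + p.2) with hS
  have hdecomp : K - Matrix.of (fun r s => if lev r + lev s ≤ m then K r s else 0)
      = ∑ p ∈ S, embBlock lev K p.1 p.2 := by
    ext r s
    rw [Matrix.sum_apply]
    have h1 : ∀ p ∈ S, embBlock lev K p.1 p.2 r s
        = if p = (lev r, lev s) then K r s else 0 := by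
      intro p _
      have hiff : (lev r = p.1 ∧ lev s = p.2) ↔ p = (lev r, lev s) := by
        rw [Prod.ext_iff]
        constructor <;> rintro ⟨h1, h2⟩ <;> exact ⟨h1.symm, h2.symm⟩
      simp only [embBlock, Matrix.of_apply, hiff]
    rw [Finset.sum_congr rfl h1, Finset.sum_ite_eq' S (lev r, lev s) (fun _ => K r s)]
    have hmem : (lev r, lev s) ∈ S ↔ m < lev r + lev s := by
      simp [hS, Nat.lt_succ_iff, hlev r, hlev s]
    simp only [Matrix.sub_apply, Matrix.of_apply]
    by_cases h : lev r + lev s ≤ m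
    · rw [if_pos h, if_neg (by rw [hmem]; omega)]; ring
    · rw [if_neg h, if_pos (by rw [hmem]; omega)]; ring
  rw [hdecomp]
  have htri : l2OpNorm (∑ p ∈ S, embBlock lev K p.1 p.2)
      ≤ ∑ p ∈ S, l2OpNorm (embBlock lev K p.1 p.2) := by
    unfold l2OpNorm
    rw [map_sum, map_sum]
    exact norm_sum_le _ _
  have hterm : ∀ p ∈ S, l2OpNorm (embBlock lev K p.1 p.2)
      ≤ c * ((2:ℝ) ^ (p.1 + p.2))⁻¹ := by
    intro p hp
    simp only [hS, mem_filter, mem_product, mem_range, Nat.lt_succ_iff] at hp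
    exact (emb_le_block lev K p.1 p.2).trans (hblock p.1 p.2 hp.1.1 hp.1.2)
  calc l2OpNorm (∑ p ∈ S, embBlock lev K p.1 p.2)
      ≤ ∑ p ∈ S, l2OpNorm (embBlock lev K p.1 p.2) := htri
    _ ≤ ∑ p ∈ S, c * ((2:ℝ) ^ (p.1 + p.2))⁻¹ := Finset.sum_le_sum hterm
    _ = ∑ p ∈ (range (L+1)) ×ˢ (range (L+1)),
          (if m < p.1 + p.2 then c * ((2:ℝ) ^ (p.1 + p.2))⁻¹ else 0) := by
        rw [hS, Finset.sum_filter]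
    _ = ∑ i ∈ range (L+1), ∑ j ∈ range (L+1),
          (if m < i + j then c * ((2:ℝ) ^ (i + j))⁻¹ else 0) := by rw [Finset.sum_product]
    _ ≤ ∑ i ∈ range (L+1), c * ((2:ℝ) ^ m)⁻¹ := by
        refine Finset.sum_le_sum fun i _ => ?_
        calc ∑ j ∈ range (L+1), (if m < i + j then c * ((2:ℝ) ^ (i + j))⁻¹ else 0)
            = c * ∑ j ∈ range (L+1), (if m < i + j then ((2:ℝ) ^ (i + j))⁻¹ else 0) := by
              rw [Finset.mul_sum]
              exact Finset.sum_congr rfl fun j _ => by split <;> simp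
          _ ≤ c * ((2:ℝ) ^ m)⁻¹ :=
              mul_le_mul_of_nonneg_left (inner_sum_le m i L) hc
    _ = c * (L + 1) * ((2:ℝ) ^ m)⁻¹ := by
        rw [Finset.sum_const, card_range, nsmul_eq_mul]
        push_cast
        ring
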